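/- Each of the first five terms of the pentagon recurrence sequence x, y, (y+1)/x, (x+y+1)/(xy), (x+1)/y is a Laurent polynomial in x and y with nonnegative integer coefficients. -/
import Mathlib


open MvPolynomial

/-- Each of the first five terms of the pentagon recurrence,
`x, y, (y+1)/x, (x+y+1)/(xy), (x+1)/y`, is a Laurent polynomial in `x` and `y`
with nonnegative integer coefficients. -/
theorem pentagon_terms_are_nonneg_laurent
    (x y : FractionRing (MvPolynomial (Fin 2) ℚ))
    (hx : x = algebraMap (MvPolynomial (Fin 2) ℚ) (FractionRing (MvPolynomial (Fin 2) ℚ)) (X 0))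
    (hy : y = algebraMap (MvPolynomial (Fin 2) ℚ) (FractionRing (MvPolynomial (Fin 2) ℚ)) (X 1)) :
    ∀ r ∈ ({x, y, (y + 1) / x, (x + y + 1) / (x * y), (x + 1) / y} :
        Set (FractionRing (MvPolynomial (Fin 2) ℚ))),
      ∃ (s : Finset (ℤ × ℤ)) (c : ℤ × ℤ → ℕ),
        r = ∑ p ∈ s, (c p : FractionRing (MvPolynomial (Fin 2) ℚ)) * x ^ p.1 * y ^ p.2 := by
  have hx0 : x ≠ 0 := by
    rw [hx]
    exact (map_ne_zero_iff _ (IsFractionRing.injective _ _)).mpr (X_ne_zero _)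
  have hy0 : y ≠ 0 := by
    rw [hy]
    exact (map_ne_zero_iff _ (IsFractionRing.injective _ _)).mpr (X_ne_zero _)
  intro r hr
  simp only [Set.mem_insert_iff, Set.mem_singleton_iff] at hr
  rcases hr with h | h | h | h | h
  · exact ⟨{(1, 0)}, fun _ => 1, by simp [h]⟩
  · exact ⟨{(0, 1)}, fun _ => 1, by simp [h]⟩
  · refine ⟨{(-1, 1), (-1, 0)}, fun _ => 1, ?_⟩
    rw [Finset.sum_pair (by decide)]
    simp only [h, Nat.cast_one, one_mul, zpow_neg, zpow_one, zpow_zero, mul_one]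
    field_simp
  · refine ⟨{(0, -1), (-1, 0), (-1, -1)}, fun _ => 1, ?_⟩
    rw [show ({(0, -1), (-1, 0), (-1, -1)} : Finset (ℤ × ℤ)) =
      insert (0, -1) {(-1, 0), (-1, -1)} from rfl,
      Finset.sum_insert (by decide), Finset.sum_pair (by decide)]
    simp only [h, Nat.cast_one, one_mul, zpow_neg, zpow_one, zpow_zero, mul_one, one_mul]
    field_simp
    ring
  · refine ⟨{(1, -1), (0, -1)}, fun _ => 1, ?_⟩
    rw [Finset.sum_pair (by decide)]
    simp only [h, Nat.cast_one, one_mul, zpow_neg, zpow_one, zpow_zero, mul_one]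
    field_simp
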